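/- For every n ≥ 0, the set {x² + nx : x ∈ ℕ⁺} is closed in the Golomb space. -/

import Mathlib

open NumberTheorySymbols

/-- The base of the Golomb topology: arithmetic progressions `{a + b*n : n ≥ 0}`
with coprime `a, b ≥ 1`, viewed inside the positive integers. -/
def golombBasis : Set (Set ℕ+) :=
  {S | ∃ a b : ℕ, 1 ≤ a ∧ 1 ≤ b ∧ Nat.Coprime a b ∧
    S = {x : ℕ+ | ∃ n : ℕ, (x : ℕ) = a + b * n}}

/-- The Golomb (relatively prime integer) topology on `ℕ+`. -/
instance golombTopology : TopologicalSpace ℕ+ :=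
  TopologicalSpace.generateFrom golombBasis

private lemma coprime_of_modEq_one {b M : ℕ} (h : b ≡ 1 [MOD M]) : Nat.Coprime b M := by
  have := h.gcd_eq
  simpa [Nat.Coprime, Nat.gcd_comm] using this.trans (Nat.gcd_one_left M)

private lemma jacobi_one_of_mod {M : ℕ} : ∀ b : ℕ, b ≡ 1 [MOD 8 * M] → J((M : ℤ) | b) = 1 := by
  induction M using Nat.strong_induction_on with
  | _ M ih =>
    intro b hb
    rcases Nat.eq_zero_or_pos M with rfl | hM
    · have : b = 1 := by simpa [Nat.ModEq] using hb
      simp [this]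
    have h8 : b % 8 = 1 := by
      have := hb.of_dvd (Dvd.intro M rfl)
      simpa [Nat.ModEq] using this
    have hodd : Odd b := by
      rw [Nat.odd_iff]; omega
    rcases Nat.even_or_odd M with hMe | hMo
    · obtain ⟨m2, hm2⟩ := hMe
      obtain ⟨M', rfl⟩ : ∃ M'', M = 2 * M'' := ⟨m2, by omega⟩
      have hM' : 0 < M' := by omega
      push_cast
      rw [jacobiSym.mul_left]
      have h2 : J((2 : ℤ) | b) = 1 := by
        rw [jacobiSym.at_two hodd, ZMod.χ₈_nat_mod_eight, h8]
        decide
      have hrec : J((M' : ℤ) | b) = 1 := by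
        refine ih M' (by omega) b (hb.of_dvd ?_)
        exact ⟨2, by ring⟩
      rw [h2, hrec, one_mul]
    · have h4 : b % 4 = 1 := by omega
      rw [jacobiSym.quadratic_reciprocity_one_mod_four' hMo h4]
      have hbM : b ≡ 1 [MOD M] := hb.of_dvd ⟨8, by ring⟩
      have : J((b : ℤ) | M) = J((1 : ℤ) | M) := by
        apply jacobiSym.mod_left'
        have : (b : ℤ) % M = (1 : ℤ) % M := by exact_mod_cast congrArg (Nat.cast (R := ℤ)) hbM
        simpa using this
      rw [this, jacobiSym.one_left]

/-- Key lemma: for a positive nonsquare `N`, there is an odd number `b₀` coprime to `8*N`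
with `J(N | b₀) = -1`. -/
private lemma exists_jacobi_neg_one {N : ℕ} (hN : 0 < N) (hns : ¬ IsSquare N) :
    ∃ b₀ : ℕ, b₀.Coprime (8 * N) ∧ J((N : ℤ) | b₀) = -1 := by
  -- find a prime q with odd exponent in N
  obtain ⟨q, hq, α, hα, M, hNM, hqM, hM⟩ :
      ∃ q, q.Prime ∧ ∃ α, Odd α ∧ ∃ M, q ^ α * M = N ∧ ¬ q ∣ M ∧ 0 < M := by
    obtain ⟨a, s, hsa, hsq⟩ := Nat.sq_mul_squarefree N
    have ha0 : a ≠ 0 := by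
      rintro rfl; rw [mul_zero] at hsa; omega
    have hs0 : s ≠ 0 := by
      rintro rfl; simp at hsa; omega
    have ha1 : a ≠ 1 := by
      rintro rfl; exact hns ⟨s, by rw [← hsa]; ring⟩
    refine ⟨a.minFac, Nat.minFac_prime ha1, N.factorization a.minFac, ?_,
      N / a.minFac ^ N.factorization a.minFac,
      Nat.ordProj_mul_ordCompl_eq_self N a.minFac,
      Nat.not_dvd_ordCompl (Nat.minFac_prime ha1) hN.ne',
      Nat.ordCompl_pos a.minFac hN.ne'⟩
    have hfac : N.factorization a.minFac
        = 2 * s.factorization a.minFac + a.factorization a.minFac := by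
      rw [← hsa, Nat.factorization_mul (pow_ne_zero 2 hs0) ha0, Nat.factorization_pow]
      simp [mul_comm]
    rw [hfac, Nat.factorization_eq_one_of_squarefree hsq (Nat.minFac_prime ha1) (Nat.minFac_dvd a)]
    exact ⟨s.factorization a.minFac, by ring⟩
  haveI : Fact q.Prime := ⟨hq⟩
  by_cases hq2 : q = 2
  · -- q = 2 : M is odd
    subst hq2
    have hMo : Odd M := Nat.odd_iff.mpr (by omega)
    have hco : Nat.Coprime 8 M := by
      have h2M : Nat.Coprime 2 M := (Nat.Prime.coprime_iff_not_dvd hq).mpr hqM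
      calc Nat.gcd 8 M = Nat.gcd (2 ^ 3) M := by norm_num
        _ = 1 := Nat.Coprime.pow_left 3 h2M
    obtain ⟨b₀, hb8, hbM⟩ := Nat.chineseRemainder hco 5 1
    have h8 : b₀ % 8 = 5 := by simpa [Nat.ModEq] using hb8
    have hodd : Odd b₀ := Nat.odd_iff.mpr (by omega)
    refine ⟨b₀, ?_, ?_⟩
    · have c8 : Nat.Coprime b₀ 8 := by
        have : Nat.Coprime b₀ 2 := hodd.coprime_two_right
        calc Nat.gcd b₀ 8 = Nat.gcd b₀ (2 ^ 3) := by norm_num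
          _ = 1 := Nat.Coprime.pow_right 3 this
      have cM : Nat.Coprime b₀ M := coprime_of_modEq_one hbM
      have cq : Nat.Coprime b₀ (2 ^ α) := Nat.Coprime.pow_right α (hodd.coprime_two_right)
      have : Nat.Coprime b₀ N := by rw [← hNM]; exact Nat.Coprime.mul_right cq cM
      exact Nat.Coprime.mul_right c8 this
    · rw [← hNM]
      push_cast
      rw [jacobiSym.mul_left, jacobiSym.pow_left]
      have h2 : J((2 : ℤ) | b₀) = -1 := by
        rw [jacobiSym.at_two hodd, ZMod.χ₈_nat_mod_eight, h8]
        decide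
      have hMb : J((M : ℤ) | b₀) = 1 := by
        rw [jacobiSym.quadratic_reciprocity_one_mod_four' hMo (by omega)]
        have : J((b₀ : ℤ) | M) = J((1 : ℤ) | M) := by
          apply jacobiSym.mod_left'
          have : (b₀ : ℤ) % M = (1 : ℤ) % M := by exact_mod_cast congrArg (Nat.cast (R := ℤ)) hbM
          simpa using this
        rw [this, jacobiSym.one_left]
      rw [h2, hMb, hα.neg_one_pow, mul_one]
  · -- q odd
    have hqodd : Odd q := hq.odd_of_ne_two hq2
    have hco : Nat.Coprime (8 * M) q := by
      have h2q : ¬ q ∣ 8 := by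
        intro h
        exact hq2 ((Nat.prime_dvd_prime_iff_eq hq Nat.prime_two).mp
          (hq.dvd_of_dvd_pow (show q ∣ 2 ^ 3 by norm_num [h])))
      have : Nat.Coprime q (8 * M) := Nat.Coprime.mul_right
        ((Nat.Prime.coprime_iff_not_dvd hq).mpr h2q)
        ((Nat.Prime.coprime_iff_not_dvd hq).mpr hqM)
      exact this.symm
    have hchar : ringChar (ZMod q) ≠ 2 := by
      rw [ZMod.ringChar_zmod_n]; exact hq2
    obtain ⟨c, hc⟩ := FiniteField.exists_nonsquare hchar
    obtain ⟨b₀, hb1, hbc⟩ := Nat.chineseRemainder hco 1 c.val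
    have hcast : (b₀ : ZMod q) = c := by
      have := (ZMod.natCast_eq_natCast_iff _ _ _).mpr hbc
      rwa [ZMod.natCast_rightInverse c] at this
    have h8M : b₀ % (8 * M) = 1 := by
      have h1 : (1 : ℕ) % (8 * M) = 1 := Nat.one_mod_eq_one.mpr (by omega)
      simpa [Nat.ModEq, h1] using hb1
    have h8 : b₀ % 8 = 1 := by
      have := hb1.of_dvd (Dvd.intro M rfl)
      simpa [Nat.ModEq] using this
    have hodd : Odd b₀ := Nat.odd_iff.mpr (by omega)
    have hc0 : c ≠ 0 := by rintro rfl; exact hc ⟨0, by ring⟩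
    have cq : Nat.Coprime b₀ q := by
      rw [Nat.coprime_comm, Nat.Prime.coprime_iff_not_dvd hq]
      intro h
      exact hc0 (by rw [← hcast, (ZMod.natCast_eq_zero_iff b₀ q).mpr h])
    refine ⟨b₀, ?_, ?_⟩
    · have c8M : Nat.Coprime b₀ (8 * M) := coprime_of_modEq_one hb1
      have c8 : Nat.Coprime b₀ 8 := Nat.Coprime.coprime_dvd_right (Dvd.intro M rfl) c8M
      have cM : Nat.Coprime b₀ M := Nat.Coprime.coprime_dvd_right (Dvd.intro_left 8 rfl) c8M
      have : Nat.Coprime b₀ N := by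
        rw [← hNM]; exact Nat.Coprime.mul_right (Nat.Coprime.pow_right α cq) cM
      exact Nat.Coprime.mul_right c8 this
    · rw [← hNM]
      push_cast
      rw [jacobiSym.mul_left, jacobiSym.pow_left]
      have hqb : J((q : ℤ) | b₀) = -1 := by
        rw [jacobiSym.quadratic_reciprocity_one_mod_four' hqodd (by omega),
          ← jacobiSym.legendreSym.to_jacobiSym]
        rw [legendreSym.eq_neg_one_iff]
        rw [show ((b₀ : ℤ) : ZMod q) = (b₀ : ZMod q) by push_cast; ring, hcast]
        exact hc
      have hMb : J((M : ℤ) | b₀) = 1 := jacobi_one_of_mod b₀ (by simpa [Nat.ModEq, Nat.one_mod_eq_one.mpr (show 8 * M ≠ 1 by omega)] using h8M)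
      rw [hqb, hMb, hα.neg_one_pow, mul_one]

private lemma exists_prime_nonresidue {N : ℕ} (B : ℕ) (hN : 0 < N) (hns : ¬ IsSquare N) :
    ∃ p : ℕ, p.Prime ∧ B < p ∧ ¬ IsSquare ((N : ZMod p)) := by
  obtain ⟨b₀, hcop, hJ⟩ := exists_jacobi_neg_one hN hns
  haveI : NeZero (8 * N) := ⟨by omega⟩
  have hunit : IsUnit ((b₀ : ZMod (8 * N))) := (ZMod.isUnit_iff_coprime b₀ (8 * N)).mpr hcop
  obtain ⟨p, hpB, hp, hpmod⟩ := Nat.forall_exists_prime_gt_and_eq_mod hunit B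
  have hmod : p ≡ b₀ [MOD 8 * N] := (ZMod.natCast_eq_natCast_iff _ _ _).mp hpmod
  have hb₀odd : Odd b₀ := by
    have : Nat.Coprime b₀ 2 := Nat.Coprime.coprime_dvd_right (by omega) hcop
    exact Nat.coprime_two_right.mp this
  have hpodd : Odd p := by
    have h2 : p % 2 = b₀ % 2 := hmod.of_dvd (by omega)
    rw [Nat.odd_iff] at hb₀odd ⊢
    omega
  have hmod4 : p % (4 * N) = b₀ % (4 * N) := hmod.of_dvd ⟨2, by ring⟩
  have hJp : J((N : ℤ) | p) = -1 := by
    rw [jacobiSym.mod_right' N hpodd, hmod4, ← jacobiSym.mod_right' N hb₀odd, hJ]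
  refine ⟨p, hp, hpB, ?_⟩
  have := ZMod.nonsquare_of_jacobiSym_eq_neg_one hJp
  simpa using this

theorem closed_quadratic_image (n : ℕ) :
    IsClosed {y : ℕ+ | ∃ x : ℕ+, (y : ℕ) = (x : ℕ) * (x : ℕ) + n * (x : ℕ)} := by
  rw [← isOpen_compl_iff, isOpen_iff_forall_mem_open]
  intro y hy
  set N : ℕ := 4 * (y : ℕ) + n * n with hNdef
  have hN : 0 < N := by have := y.pos; omega
  have hns : ¬ IsSquare N := by
    rintro ⟨m, hm⟩
    apply hy
    have hnm : n < m := by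
      by_contra h
      push_neg at h
      have := Nat.mul_le_mul h h
      have := y.pos
      omega
    have hpar : (m % 2 = 0 ↔ n % 2 = 0) := by
      have hmm : m * m = 4 * (y : ℕ) + n * n := hm.symm
      constructor
      · intro h
        by_contra hn
        have hmo : Even (m * m) := (Nat.even_mul).mpr (Or.inl (Nat.even_iff.mpr h))
        have hno : Odd (n * n) := (Nat.odd_mul).mpr ⟨Nat.odd_iff.mpr (by omega), Nat.odd_iff.mpr (by omega)⟩
        rw [hmm] at hmo
        rcases hmo with ⟨t, ht⟩
        rcases hno with ⟨t', ht'⟩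
        omega
      · intro h
        by_contra hmn
        have hmo : Odd (m * m) := (Nat.odd_mul).mpr ⟨Nat.odd_iff.mpr (by omega), Nat.odd_iff.mpr (by omega)⟩
        have hno : Even (n * n) := (Nat.even_mul).mpr (Or.inl (Nat.even_iff.mpr h))
        rw [hmm] at hmo
        rcases hmo with ⟨t, ht⟩
        rcases hno with ⟨t', ht'⟩
        omega
    obtain ⟨x, hx, hmx⟩ : ∃ x : ℕ, 1 ≤ x ∧ m = n + 2 * x := by
      refine ⟨(m - n) / 2, by omega, by omega⟩
    refine ⟨⟨x, hx⟩, ?_⟩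
    have hexp : (n + 2 * x) * (n + 2 * x) = 4 * (x * x + n * x) + n * n := by ring
    rw [hmx, hexp] at hm
    have : (y : ℕ) = x * x + n * x := by omega
    simpa using this
  obtain ⟨p, hp, hpy, hnsq⟩ := exists_prime_nonresidue (y : ℕ) hN hns
  refine ⟨{x : ℕ+ | ∃ k : ℕ, (x : ℕ) = (y : ℕ) + p * k}, ?_, ?_, ⟨0, by simp⟩⟩
  · rintro z ⟨k, hzk⟩ ⟨x, hx⟩
    have hz : ((z : ℕ) : ZMod p) = ((y : ℕ) : ZMod p) := by
      rw [hzk]; push_cast [ZMod.natCast_self]; ring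
    have hzx : ((z : ℕ) : ZMod p) = ((x : ℕ) : ZMod p) * (x : ℕ) + (n : ZMod p) * (x : ℕ) := by
      rw [hx]; push_cast; ring
    have key : ((N : ℕ) : ZMod p) = ((2 * (x : ℕ) + n : ℕ) : ZMod p) ^ 2 := by
      rw [hNdef]
      push_cast
      rw [← hz, hzx]
      ring
    exact hnsq (key ▸ IsSquare.sq _)
  · refine TopologicalSpace.GenerateOpen.basic _ ⟨(y : ℕ), p, y.pos, hp.one_lt.le, ?_, rfl⟩
    rw [Nat.coprime_comm, Nat.Prime.coprime_iff_not_dvd hp]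
    intro h
    exact absurd (Nat.le_of_dvd y.pos h) (by omega)
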